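/- Let σ be the unique solution in [0, 1) of (π/2 + arcsin σ)·√(1 − σ²) = 1 + σ, set η̃ := π/2 − √((1 − σ)/(1 + σ)) − arcsin σ, and for 0 < α < η̃ let τ(α) be the unique solution in [0, 1) of (π/2 − α − arcsin τ)·√(1 − τ²) = 1 − τ. Define L(η) := 5π + 2/√(1 − τ(η/2)²) for 0 < η/2 < η̃, and L(η) := 5π + π − η/2 for η̃ ≤ η/2 < π. Then the function f₄(x, y) = sin(5y)·arcsin(x) − sin(5x)·arcsin(y) satisfies, for every η ∈ (0, 2π) and all p, q ∈ [−1, 1]², the inequality |f₄(p) − f₄(q)| ≤ L(η)·‖p − q‖₁ + η, where ‖(u, v)‖₁ = |u| + |v| is the ℓ¹ norm on ℝ². -/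

import Mathlib

set_option maxHeartbeats 1600000

open Real Set

/-- Increment bound for arcsin: if `m = 1/√(1-τ²)` and `α` dominates both
`π/2 - arcsin τ - (1-τ)m` and `π - 2m`, then `arcsin x - arcsin y ≤ M(x-y)+α` for `y ≤ x`. -/
lemma arcsin_step (τ M α : ℝ) (hτ0 : 0 ≤ τ) (hτ1 : τ < 1)
    (hM : 1 / Real.sqrt (1 - τ^2) ≤ M) (hα0 : 0 ≤ α)
    (hb : Real.pi/2 - Real.arcsin τ - (1 - τ) * (1 / Real.sqrt (1 - τ^2)) ≤ α)
    (hc : Real.pi - 2 * (1 / Real.sqrt (1 - τ^2)) ≤ α) :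
    ∀ x y : ℝ, -1 ≤ y → y ≤ x → x ≤ 1 →
      Real.arcsin x - Real.arcsin y ≤ M * (x - y) + α := by
  intro x y hy hyx hx
  have h1τ : 0 < 1 - τ^2 := by nlinarith
  have hs : 0 < Real.sqrt (1 - τ^2) := Real.sqrt_pos.mpr h1τ
  set m : ℝ := 1 / Real.sqrt (1 - τ^2) with hmdef
  have hm0 : 0 < m := by positivity
  -- reduce to M = m
  have hred : m * (x - y) ≤ M * (x - y) :=
    mul_le_mul_of_nonneg_right hM (by linarith)
  suffices h : Real.arcsin x - Real.arcsin y ≤ m * (x - y) + α by linarith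
  set G : ℝ → ℝ := fun t => Real.arcsin t - m * t with hGdef
  have hGc : Continuous G := Real.continuous_arcsin.sub (continuous_const.mul continuous_id)
  have hderiv : ∀ t : ℝ, -1 < t → t < 1 →
      HasDerivAt G (1 / Real.sqrt (1 - t^2) - m) t := by
    intro t h1 h2
    have h := (Real.hasDerivAt_arcsin (by linarith) (by linarith)).sub
      ((hasDerivAt_id t).const_mul m)
    simp only [mul_one] at h
    exact h
  have hmono1 : MonotoneOn G (Icc τ 1) := by
    apply monotoneOn_of_deriv_nonneg (convex_Icc _ _) hGc.continuousOn
    · rw [interior_Icc]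
      intro t ht
      exact (hderiv t (by linarith [ht.1]) ht.2).differentiableAt.differentiableWithinAt
    · rw [interior_Icc]
      intro t ht
      rw [(hderiv t (by linarith [ht.1]) ht.2).deriv]
      have hts : 0 < Real.sqrt (1 - t^2) := Real.sqrt_pos.mpr (by nlinarith [ht.1, ht.2])
      have hle : Real.sqrt (1 - t^2) ≤ Real.sqrt (1 - τ^2) :=
        Real.sqrt_le_sqrt (by nlinarith [ht.1, ht.2])
      have := one_div_le_one_div_of_le hts hle
      simp only [hmdef]; linarith
  have hmono2 : MonotoneOn G (Icc (-1) (-τ)) := by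
    apply monotoneOn_of_deriv_nonneg (convex_Icc _ _) hGc.continuousOn
    · rw [interior_Icc]
      intro t ht
      exact (hderiv t ht.1 (by linarith [ht.2])).differentiableAt.differentiableWithinAt
    · rw [interior_Icc]
      intro t ht
      rw [(hderiv t ht.1 (by linarith [ht.2])).deriv]
      have hts : 0 < Real.sqrt (1 - t^2) := Real.sqrt_pos.mpr (by nlinarith [ht.1, ht.2])
      have hle : Real.sqrt (1 - t^2) ≤ Real.sqrt (1 - τ^2) :=
        Real.sqrt_le_sqrt (by nlinarith [ht.1, ht.2])
      have := one_div_le_one_div_of_le hts hle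
      simp only [hmdef]; linarith
  have hanti : AntitoneOn G (Icc (-τ) τ) := by
    apply antitoneOn_of_deriv_nonpos (convex_Icc _ _) hGc.continuousOn
    · rw [interior_Icc]
      intro t ht
      exact (hderiv t (by linarith [ht.1]) (by linarith [ht.2])).differentiableAt.differentiableWithinAt
    · rw [interior_Icc]
      intro t ht
      rw [(hderiv t (by linarith [ht.1]) (by linarith [ht.2])).deriv]
      have hts : 0 < Real.sqrt (1 - t^2) := Real.sqrt_pos.mpr (by nlinarith [ht.1, ht.2])
      have hle : Real.sqrt (1 - τ^2) ≤ Real.sqrt (1 - t^2) :=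
        Real.sqrt_le_sqrt (by nlinarith [ht.1, ht.2])
      have := one_div_le_one_div_of_le hs hle
      simp only [hmdef]; linarith
  have hG1 : G 1 = Real.pi/2 - m := by simp [hGdef, Real.arcsin_one]
  have hGm1 : G (-1) = -(Real.pi/2) + m := by
    simp [hGdef, Real.arcsin_neg_one]
  have hGτ : G τ = Real.arcsin τ - m * τ := rfl
  have hGmτ : G (-τ) = -(Real.arcsin τ) + m * τ := by
    simp [hGdef, Real.arcsin_neg]
  have hmul : (1 - τ) * m = m - τ * m := by ring
  have key1 : G 1 - G τ ≤ α := by rw [hG1, hGτ]; linarith [hb, hmul]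
  have key2 : G (-τ) - G (-1) ≤ α := by rw [hGmτ, hGm1]; linarith [hb, hmul]
  have key3 : G 1 - G (-1) ≤ α := by rw [hG1, hGm1]; linarith [hc]
  suffices hGG : G x - G y ≤ α by
    have : Real.arcsin x - Real.arcsin y - m * (x - y) = G x - G y := by
      simp [hGdef]; ring
    linarith
  have hmτ1 : (-1 : ℝ) ≤ -τ := by linarith
  rcases le_or_gt x (-τ) with hx1 | hx1
  · have hxle : G x ≤ G (-τ) := hmono2 ⟨by linarith, hx1⟩ ⟨hmτ1, le_refl _⟩ hx1
    have hyge : G (-1) ≤ G y := hmono2 ⟨le_refl _, by linarith⟩ ⟨hy, by linarith⟩ hy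
    linarith
  · rcases le_or_gt x τ with hx2 | hx2
    · rcases le_or_gt y (-τ) with hy1 | hy1
      · have hxle : G x ≤ G (-τ) := hanti ⟨le_refl _, by linarith⟩ ⟨hx1.le, hx2⟩ hx1.le
        have hyge : G (-1) ≤ G y := hmono2 ⟨le_refl _, by linarith⟩ ⟨hy, hy1⟩ hy
        linarith
      · have := hanti ⟨hy1.le, by linarith⟩ ⟨hx1.le, hx2⟩ hyx
        linarith
    · have hxle : G x ≤ G 1 := hmono1 ⟨hx2.le, hx⟩ ⟨by linarith, le_refl _⟩ hx
      rcases le_or_gt y (-τ) with hy1 | hy1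
      · have hyge : G (-1) ≤ G y := hmono2 ⟨le_refl _, by linarith⟩ ⟨hy, hy1⟩ hy
        linarith
      · rcases le_or_gt y τ with hy2 | hy2
        · have hyge : G τ ≤ G y := hanti ⟨hy1.le, hy2⟩ ⟨by linarith, le_refl _⟩ hy2
          linarith
        · have hyge : G τ ≤ G y := hmono1 ⟨le_refl _, by linarith⟩ ⟨hy2.le, by linarith⟩ hy2.le
          linarith

lemma arcsin_abs_bound (τ M α : ℝ) (hτ0 : 0 ≤ τ) (hτ1 : τ < 1)
    (hM : 1 / Real.sqrt (1 - τ^2) ≤ M) (hα0 : 0 ≤ α)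
    (hb : Real.pi/2 - Real.arcsin τ - (1 - τ) * (1 / Real.sqrt (1 - τ^2)) ≤ α)
    (hc : Real.pi - 2 * (1 / Real.sqrt (1 - τ^2)) ≤ α) :
    ∀ a b : ℝ, -1 ≤ a → a ≤ 1 → -1 ≤ b → b ≤ 1 →
      |Real.arcsin a - Real.arcsin b| ≤ M * |a - b| + α := by
  have hstep := arcsin_step τ M α hτ0 hτ1 hM hα0 hb hc
  have h1τ : 0 < 1 - τ^2 := by nlinarith
  have hM0 : 0 < M :=
    lt_of_lt_of_le (one_div_pos.mpr (Real.sqrt_pos.mpr h1τ)) hM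
  intro a b ha ha' hb' hb''
  rcases le_total b a with h | h
  · rw [abs_of_nonneg (by linarith : (0:ℝ) ≤ a - b), abs_sub_le_iff]
    constructor
    · exact hstep a b hb' h ha'
    · have := Real.monotone_arcsin h
      nlinarith
  · rw [abs_of_nonpos (by linarith : a - b ≤ 0), abs_sub_le_iff]
    constructor
    · have := Real.monotone_arcsin h
      nlinarith
    · have := hstep b a ha h hb''
      linarith [this]

/-- `k(t) = (π/2 + arcsin t)√(1-t²) - (1+t)` is antitone on `[a,b] ⊆ [0,1)`. -/
lemma k_anti (a b : ℝ) (ha : 0 ≤ a) (hb : b < 1) (hab : a ≤ b) :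
    (Real.pi/2 + Real.arcsin b) * Real.sqrt (1 - b^2) - (1 + b) ≤
      (Real.pi/2 + Real.arcsin a) * Real.sqrt (1 - a^2) - (1 + a) := by
  set k : ℝ → ℝ := fun t =>
    (Real.pi/2 + Real.arcsin t) * Real.sqrt (1 - t^2) - (1 + t) with hkdef
  have hkc : Continuous k := by
    apply Continuous.sub
    · exact (continuous_const.add Real.continuous_arcsin).mul
        (Real.continuous_sqrt.comp (continuous_const.sub (continuous_pow 2)))
    · exact continuous_const.add continuous_id
  have hkanti : AntitoneOn k (Icc a b) := by
    apply antitoneOn_of_deriv_nonpos (convex_Icc _ _) hkc.continuousOn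
    · rw [interior_Icc]
      intro t ht
      have ht0 : 0 < t := lt_of_le_of_lt ha ht.1
      have ht1 : t < 1 := lt_of_lt_of_le ht.2 (le_of_lt hb)
      have h1t : 0 < 1 - t^2 := by nlinarith
      have h2 : HasDerivAt (fun s : ℝ => 1 - s^2) (-(2*t^1)) t :=
        (hasDerivAt_pow 2 t).const_sub 1
      have h3 : HasDerivAt (fun s : ℝ => Real.sqrt (1 - s^2))
          (-(2*t^1) / (2 * Real.sqrt (1 - t^2))) t := h2.sqrt (by positivity)
      have h1 : HasDerivAt (fun s : ℝ => Real.pi/2 + Real.arcsin s)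
          (1 / Real.sqrt (1 - t^2)) t :=
        (Real.hasDerivAt_arcsin (by linarith) (by linarith)).const_add (Real.pi/2)
      exact ((h1.mul h3).sub ((hasDerivAt_id t).const_add 1)).differentiableAt.differentiableWithinAt
    · rw [interior_Icc]
      intro t ht
      have ht0 : 0 < t := lt_of_le_of_lt ha ht.1
      have ht1 : t < 1 := lt_of_lt_of_le ht.2 (le_of_lt hb)
      have h1t : 0 < 1 - t^2 := by nlinarith
      have hst : 0 < Real.sqrt (1 - t^2) := Real.sqrt_pos.mpr h1t
      have h2 : HasDerivAt (fun s : ℝ => 1 - s^2) (-(2*t^1)) t :=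
        (hasDerivAt_pow 2 t).const_sub 1
      have h3 : HasDerivAt (fun s : ℝ => Real.sqrt (1 - s^2))
          (-(2*t^1) / (2 * Real.sqrt (1 - t^2))) t := h2.sqrt (by positivity)
      have h1 : HasDerivAt (fun s : ℝ => Real.pi/2 + Real.arcsin s)
          (1 / Real.sqrt (1 - t^2)) t :=
        (Real.hasDerivAt_arcsin (by linarith) (by linarith)).const_add (Real.pi/2)
      have h4 : HasDerivAt k
          ((1 / Real.sqrt (1 - t^2)) * Real.sqrt (1 - t^2) +
            (Real.pi/2 + Real.arcsin t) * (-(2*t^1) / (2 * Real.sqrt (1 - t^2))) - 1) t := by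
        have := (h1.mul h3).sub ((hasDerivAt_id t).const_add 1)
        exact this
      rw [h4.deriv]
      have e1 : (1 / Real.sqrt (1 - t^2)) * Real.sqrt (1 - t^2) = 1 := by
        field_simp
      have e2 : (0:ℝ) ≤ (Real.pi/2 + Real.arcsin t) * (2*t^1 / (2 * Real.sqrt (1 - t^2))) := by
        apply mul_nonneg
        · linarith [Real.neg_pi_div_two_le_arcsin t]
        · positivity
      have e3 : (Real.pi/2 + Real.arcsin t) * (-(2*t^1) / (2 * Real.sqrt (1 - t^2)))
          = -((Real.pi/2 + Real.arcsin t) * (2*t^1 / (2 * Real.sqrt (1 - t^2)))) := by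
        ring
      rw [e1, e3]
      linarith
  exact hkanti ⟨le_refl _, hab⟩ ⟨hab, le_refl _⟩ hab

/-- Formula (6) of the paper: with `σ`, `η̃`, `τ(·)` as indicated and
`L(η) = 5π + 2/√(1 − τ(η/2)²)` for `0 < η/2 < η̃`, `L(η) = 5π + (π − η/2)` for
`η̃ ≤ η/2 < π`, the fourth test function `f₄(x,y) = sin(5y) arcsin x − sin(5x) arcsin y`
satisfies the Vanderbei inequality on `[−1,1]²` in the ℓ¹ norm for all `η ∈ (0, 2π)`. -/
theorem stmt_12 (σ : ℝ) (hσmem : σ ∈ Set.Ico (0 : ℝ) 1)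
    (hσeq : (Real.pi / 2 + Real.arcsin σ) * Real.sqrt (1 - σ ^ 2) = 1 + σ)
    (hσuniq : ∀ σ' ∈ Set.Ico (0 : ℝ) 1,
      (Real.pi / 2 + Real.arcsin σ') * Real.sqrt (1 - σ' ^ 2) = 1 + σ' → σ' = σ)
    (η' : ℝ) (hη' : η' = Real.pi / 2 - Real.sqrt ((1 - σ) / (1 + σ)) - Real.arcsin σ)
    (τ : ℝ → ℝ)
    (hτ : ∀ α : ℝ, 0 < α → α < η' →
      τ α ∈ Set.Ico (0 : ℝ) 1 ∧
        (Real.pi / 2 - α - Real.arcsin (τ α)) * Real.sqrt (1 - (τ α) ^ 2) = 1 - τ α)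
    (hτuniq : ∀ α : ℝ, 0 < α → α < η' → ∀ τ' ∈ Set.Ico (0 : ℝ) 1,
      (Real.pi / 2 - α - Real.arcsin τ') * Real.sqrt (1 - τ' ^ 2) = 1 - τ' → τ' = τ α)
    (L : ℝ → ℝ)
    (hL1 : ∀ η : ℝ, 0 < η / 2 → η / 2 < η' →
      L η = 5 * Real.pi + 2 / Real.sqrt (1 - (τ (η / 2)) ^ 2))
    (hL2 : ∀ η : ℝ, η' ≤ η / 2 → η / 2 < Real.pi →
      L η = 5 * Real.pi + (Real.pi - η / 2)) :
    ∀ η : ℝ, 0 < η → η < 2 * Real.pi →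
      ∀ p ∈ Set.Icc ((-1 : ℝ), (-1 : ℝ)) ((1 : ℝ), (1 : ℝ)),
        ∀ q ∈ Set.Icc ((-1 : ℝ), (-1 : ℝ)) ((1 : ℝ), (1 : ℝ)),
          |(Real.sin (5 * p.2) * Real.arcsin p.1 - Real.sin (5 * p.1) * Real.arcsin p.2)
            - (Real.sin (5 * q.2) * Real.arcsin q.1 - Real.sin (5 * q.1) * Real.arcsin q.2)|
            ≤ L η * (|p.1 - q.1| + |p.2 - q.2|) + η := by
  intro η hη0 hη2π p hp q hq
  obtain ⟨hσ0, hσ1⟩ := hσmem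
  have hσ2 : 0 < 1 - σ^2 := by nlinarith
  have hsσ : 0 < Real.sqrt (1 - σ^2) := Real.sqrt_pos.mpr hσ2
  have hσeq' : (Real.pi / 2 + Real.arcsin σ) * Real.sqrt (1 - σ ^ 2) = 1 + σ := hσeq
  -- sqrt identity
  have hid : Real.sqrt ((1-σ)/(1+σ)) * Real.sqrt (1-σ^2) = 1 - σ := by
    rw [← Real.sqrt_mul (div_nonneg (by linarith) (by linarith))]
    have h1 : (1-σ)/(1+σ) * (1-σ^2) = (1-σ)^2 := by
      field_simp
      ring
    rw [h1, Real.sqrt_sq (by linarith)]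
  have hr0 : (0:ℝ) ≤ Real.sqrt ((1-σ)/(1+σ)) := Real.sqrt_nonneg _
  have haσ0 : 0 ≤ Real.arcsin σ := Real.arcsin_nonneg.mpr hσ0
  have hη'le : η' ≤ Real.pi/2 := by rw [hη']; linarith
  have hηπ : η / 2 < Real.pi := by linarith
  -- the per-coordinate bound
  have key : ∀ a b : ℝ, -1 ≤ a → a ≤ 1 → -1 ≤ b → b ≤ 1 →
      |Real.arcsin a - Real.arcsin b| ≤ (L η - 5*Real.pi/2) * |a - b| + η/2 := by
    by_cases hcase : η/2 < η'
    · -- case 1 : small η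
      obtain ⟨⟨ht0, ht1⟩, heq⟩ := hτ (η/2) (by linarith) hcase
      have h1t : 0 < 1 - (τ (η/2))^2 := by nlinarith
      have hst : 0 < Real.sqrt (1 - (τ (η/2))^2) := Real.sqrt_pos.mpr h1t
      have hLv := hL1 η (by linarith) hcase
      -- IVT: σ ≤ τ (η/2)
      have hσt : σ ≤ τ (η/2) := by
        set f : ℝ → ℝ := fun s =>
          (Real.pi/2 - η/2 - Real.arcsin s) * Real.sqrt (1 - s^2) - (1 - s) with hfdef
        have hfc : Continuous f := by
          apply Continuous.sub
          · exact (continuous_const.sub Real.continuous_arcsin).mul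
              (Real.continuous_sqrt.comp (continuous_const.sub (continuous_pow 2)))
          · exact continuous_const.sub continuous_id
        have hπσ : Real.pi/2 - η/2 - Real.arcsin σ
            = (η' - η/2) + Real.sqrt ((1-σ)/(1+σ)) := by
          rw [hη']; ring
        have heσ : 0 < f σ := by
          have hprod : 0 < (η' - η/2) * Real.sqrt (1-σ^2) :=
            mul_pos (by linarith) hsσ
          simp only [hfdef]
          nlinarith [hid]
        have hcosα1 : Real.cos (η/2) < 1 := by
          have := Real.cos_lt_cos_of_nonneg_of_le_pi (le_refl 0)
            (by linarith : η/2 ≤ Real.pi) (by linarith : (0:ℝ) < η/2)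
          rwa [Real.cos_zero] at this
        set mx : ℝ := max σ (Real.cos (η/2)) with hmx
        have hmx1 : mx < 1 := max_lt hσ1 hcosα1
        set t₀ : ℝ := (mx + 1)/2 with ht₀def
        have hmxt₀ : mx < t₀ := by rw [ht₀def]; linarith
        have ht₀1 : t₀ < 1 := by rw [ht₀def]; linarith
        have hσt₀ : σ < t₀ := lt_of_le_of_lt (le_max_left _ _) hmxt₀
        have hct₀ : Real.cos (η/2) < t₀ := lt_of_le_of_lt (le_max_right _ _) hmxt₀
        have harccos : Real.arcsin (Real.cos (η/2)) = Real.pi/2 - η/2 := by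
          rw [← Real.sin_pi_div_two_sub, Real.arcsin_sin (by linarith) (by linarith)]
        have harcmono : Real.arcsin (Real.cos (η/2)) < Real.arcsin t₀ :=
          Real.strictMonoOn_arcsin ⟨Real.neg_one_le_cos _, Real.cos_le_one _⟩
            ⟨by linarith [Real.neg_one_le_cos (η/2)], le_of_lt ht₀1⟩ hct₀
        have het₀ : f t₀ < 0 := by
          have hsn : 0 ≤ Real.sqrt (1 - t₀^2) := Real.sqrt_nonneg _
          have hneg : Real.pi/2 - η/2 - Real.arcsin t₀ < 0 := by
            rw [← harccos]; linarith
          have hergo : 0 ≤ Real.sqrt (1 - t₀^2) *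
              (Real.arcsin t₀ - (Real.pi/2 - η/2)) :=
            mul_nonneg hsn (by linarith)
          simp only [hfdef]
          nlinarith
        have hiv := intermediate_value_Icc' (le_of_lt hσt₀) hfc.continuousOn
        have h0mem : (0:ℝ) ∈ Icc (f t₀) (f σ) := ⟨le_of_lt het₀, le_of_lt heσ⟩
        obtain ⟨τ'', hτ''mem, hτ''eq⟩ := hiv h0mem
        have heq'' : (Real.pi/2 - η/2 - Real.arcsin τ'') * Real.sqrt (1 - τ''^2)
            - (1 - τ'') = 0 := hτ''eq
        have hτ''eq2 : τ'' = τ (η/2) := by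
          apply hτuniq (η/2) (by linarith) hcase τ''
          · exact ⟨by linarith [hτ''mem.1], lt_of_le_of_lt hτ''mem.2 ht₀1⟩
          · linarith [heq'']
        rw [← hτ''eq2]
        exact hτ''mem.1
      -- k(τ) ≤ 0
      have hkt : (Real.pi/2 + Real.arcsin (τ (η/2))) * Real.sqrt (1 - (τ (η/2))^2)
          - (1 + τ (η/2)) ≤ 0 := by
        have h0 := k_anti σ (τ (η/2)) hσ0 ht1 hσt
        have hkσ : (Real.pi/2 + Real.arcsin σ) * Real.sqrt (1-σ^2) - (1+σ) = 0 := by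
          rw [hσeq']; ring
        linarith
      apply arcsin_abs_bound (τ (η/2)) _ (η/2) ht0 ht1 ?_ (by linarith) ?_ ?_
      · -- hM
        rw [hLv]
        have : 0 < 1 / Real.sqrt (1 - (τ (η/2))^2) := by positivity
        have hpi := Real.pi_pos
        rw [div_eq_mul_one_div 2]
        linarith
      · -- hb
        have hfrac : (1 - τ (η/2)) * (1 / Real.sqrt (1 - (τ (η/2))^2))
            = Real.pi/2 - η/2 - Real.arcsin (τ (η/2)) := by
          rw [mul_one_div, div_eq_iff hst.ne']
          linarith [heq]
        rw [hfrac]; linarith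
      · -- hc
        have h2 : (Real.pi - η/2) * Real.sqrt (1 - (τ (η/2))^2) ≤ 2 := by
          nlinarith [hkt, heq]
        have h3 : Real.pi - η/2 ≤ 2 / Real.sqrt (1 - (τ (η/2))^2) :=
          (le_div_iff₀ hst).mpr h2
        rw [div_eq_mul_one_div 2] at h3
        linarith
    · -- case 2 : large η
      have hcase' : η' ≤ η/2 := not_lt.mp hcase
      have hLv := hL2 η hcase' hηπ
      have hfrac : (1 - σ) * (1 / Real.sqrt (1 - σ^2)) = Real.sqrt ((1-σ)/(1+σ)) := by
        rw [mul_one_div, div_eq_iff hsσ.ne']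
        linarith [hid]
      apply arcsin_abs_bound σ _ (η/2) hσ0 hσ1 ?_ (by linarith) ?_ ?_
      · -- hM : 1/sσ ≤ L η - 5π/2
        have h1 : 1 / Real.sqrt (1 - σ^2) ≤ Real.pi := by
          rw [div_le_iff₀ hsσ]
          have harcc : Real.arcsin σ ≤ Real.pi/2 := Real.arcsin_le_pi_div_two σ
          nlinarith [hσeq', hsσ]
        rw [hLv]
        have hpi := Real.pi_pos
        linarith
      · -- hb
        rw [hfrac]
        rw [hη'] at hcase'
        linarith
      · -- hc
        have hkey : (Real.pi - η') * Real.sqrt (1-σ^2) = 2 := by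
          rw [hη']
          nlinarith [hσeq', hid]
        have h2 : (Real.pi - η/2) * Real.sqrt (1-σ^2) ≤ 2 := by
          nlinarith [mul_nonneg (by linarith : (0:ℝ) ≤ η/2 - η') (le_of_lt hsσ)]
        have h3 : Real.pi - η/2 ≤ 2 / Real.sqrt (1-σ^2) := (le_div_iff₀ hsσ).mpr h2
        rw [div_eq_mul_one_div 2] at h3
        linarith
  -- assembly
  have hp1 : -1 ≤ p.1 := hp.1.1
  have hp2 : -1 ≤ p.2 := hp.1.2
  have hp1' : p.1 ≤ 1 := hp.2.1
  have hp2' : p.2 ≤ 1 := hp.2.2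
  have hq1 : -1 ≤ q.1 := hq.1.1
  have hq2 : -1 ≤ q.2 := hq.1.2
  have hq1' : q.1 ≤ 1 := hq.2.1
  have hq2' : q.2 ≤ 1 := hq.2.2
  have hsinlip : ∀ a b : ℝ, |Real.sin a - Real.sin b| ≤ |a - b| := by
    intro a b
    rw [Real.sin_sub_sin, abs_mul, abs_mul, abs_two]
    have h1 : |Real.sin ((a-b)/2)| ≤ |(a-b)/2| := Real.abs_sin_le_abs
    have h2 : |Real.cos ((a+b)/2)| ≤ 1 := Real.abs_cos_le_one _
    have h3 : |(a-b)/2| = |a-b|/2 := by rw [abs_div]; norm_num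
    nlinarith [abs_nonneg (Real.sin ((a-b)/2)), abs_nonneg (a-b),
      abs_nonneg (Real.cos ((a+b)/2))]
  set A1 : ℝ := Real.arcsin p.1 - Real.arcsin q.1 with hA1
  set A2 : ℝ := Real.arcsin p.2 - Real.arcsin q.2 with hA2
  set S1 : ℝ := Real.sin (5*p.2) - Real.sin (5*q.2) with hS1
  set S2 : ℝ := Real.sin (5*p.1) - Real.sin (5*q.1) with hS2
  set d1 : ℝ := |p.1 - q.1| with hd1
  set d2 : ℝ := |p.2 - q.2| with hd2
  have hkey1 : |A1| ≤ (L η - 5*Real.pi/2) * d1 + η/2 := key p.1 q.1 hp1 hp1' hq1 hq1'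
  have hkey2 : |A2| ≤ (L η - 5*Real.pi/2) * d2 + η/2 := key p.2 q.2 hp2 hp2' hq2 hq2'
  have hS1le : |S1| ≤ 5 * d2 := by
    have := hsinlip (5*p.2) (5*q.2)
    have h5 : |5*p.2 - 5*q.2| = 5 * d2 := by
      rw [hd2, show 5*p.2 - 5*q.2 = 5*(p.2-q.2) by ring, abs_mul]
      norm_num
    rw [hS1]; linarith
  have hS2le : |S2| ≤ 5 * d1 := by
    have := hsinlip (5*p.1) (5*q.1)
    have h5 : |5*p.1 - 5*q.1| = 5 * d1 := by
      rw [hd1, show 5*p.1 - 5*q.1 = 5*(p.1-q.1) by ring, abs_mul]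
      norm_num
    rw [hS2]; linarith
  have haq1 : |Real.arcsin q.1| ≤ Real.pi/2 :=
    abs_le.mpr ⟨Real.neg_pi_div_two_le_arcsin _, Real.arcsin_le_pi_div_two _⟩
  have haq2 : |Real.arcsin q.2| ≤ Real.pi/2 :=
    abs_le.mpr ⟨Real.neg_pi_div_two_le_arcsin _, Real.arcsin_le_pi_div_two _⟩
  have habs : ∀ u v : ℝ, |u - v| ≤ |u| + |v| := fun u v => by
    rw [sub_eq_add_neg]
    exact (abs_add_le _ _).trans (by rw [abs_neg])
  have hdecomp : (Real.sin (5 * p.2) * Real.arcsin p.1 - Real.sin (5 * p.1) * Real.arcsin p.2)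
      - (Real.sin (5 * q.2) * Real.arcsin q.1 - Real.sin (5 * q.1) * Real.arcsin q.2)
      = (Real.sin (5*p.2) * A1 + S1 * Real.arcsin q.1)
        - (Real.sin (5*p.1) * A2 + S2 * Real.arcsin q.2) := by
    rw [hA1, hA2, hS1, hS2]; ring
  rw [hdecomp]
  have step1 : |(Real.sin (5*p.2) * A1 + S1 * Real.arcsin q.1)
        - (Real.sin (5*p.1) * A2 + S2 * Real.arcsin q.2)|
      ≤ |Real.sin (5*p.2) * A1| + |S1 * Real.arcsin q.1|
        + (|Real.sin (5*p.1) * A2| + |S2 * Real.arcsin q.2|) :=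
    (habs _ _).trans (add_le_add (abs_add_le _ _) (abs_add_le _ _))
  have e1 : |Real.sin (5*p.2) * A1| ≤ |A1| := by
    rw [abs_mul]
    nlinarith [Real.abs_sin_le_one (5*p.2), abs_nonneg A1, abs_nonneg (Real.sin (5*p.2))]
  have e2 : |Real.sin (5*p.1) * A2| ≤ |A2| := by
    rw [abs_mul]
    nlinarith [Real.abs_sin_le_one (5*p.1), abs_nonneg A2, abs_nonneg (Real.sin (5*p.1))]
  have e3 : |S1 * Real.arcsin q.1| ≤ 5 * d2 * (Real.pi/2) := by
    rw [abs_mul]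
    nlinarith [abs_nonneg S1, abs_nonneg (Real.arcsin q.1), hd2, abs_nonneg (p.2 - q.2)]
  have e4 : |S2 * Real.arcsin q.2| ≤ 5 * d1 * (Real.pi/2) := by
    rw [abs_mul]
    nlinarith [abs_nonneg S2, abs_nonneg (Real.arcsin q.2), hd1, abs_nonneg (p.1 - q.1)]
  have hfin : L η * (d1 + d2) + η
      = ((L η - 5*Real.pi/2) * d1 + η/2) + 5 * d2 * (Real.pi/2)
        + (((L η - 5*Real.pi/2) * d2 + η/2) + 5 * d1 * (Real.pi/2)) := by ring
  rw [hfin]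
  linarith only [step1, e1, e2, e3, e4, hkey1, hkey2]
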